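/- Let K be a field and V, W vector spaces over K. The K-algebra homomorphism φ : TensorAlgebra K (V ⊗ W) → (TensorAlgebra K V) ⊗[K] (TensorAlgebra K W) determined by φ(ι(v ⊗ w)) = (ι v) ⊗ (ι w) is injective, and its range equals the subalgebra of (TensorAlgebra K V) ⊗[K] (TensorAlgebra K W) generated by the elements (ι v) ⊗ (ι w) for v ∈ V, w ∈ W. -/

import Mathlib

open TensorProduct

/-- The algebra homomorphism `T(V ⊗ W) → TV ⊗ TW` determined by `ι (v ⊗ w) ↦ ι v ⊗ ι w`. -/
noncomputable def tensorAlgebraTensorToTensorProduct (K V W : Type*) [Field K]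
    [AddCommGroup V] [Module K V] [AddCommGroup W] [Module K W] :
    TensorAlgebra K (V ⊗[K] W) →ₐ[K] TensorAlgebra K V ⊗[K] TensorAlgebra K W :=
  TensorAlgebra.lift K (TensorProduct.map (TensorAlgebra.ι K) (TensorAlgebra.ι K))

/-- Explicit formula for `FreeAlgebra.basisFreeMonoid`. -/
lemma freeAlgebra_basisFreeMonoid_apply {R X : Type*} [CommSemiring R] (l : FreeMonoid X) :
    FreeAlgebra.basisFreeMonoid R X l = ((FreeMonoid.toList l).map (FreeAlgebra.ι R)).prod := by
  rw [FreeAlgebra.basisFreeMonoid, Module.Basis.map_apply]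
  have h1 : (Finsupp.basisSingleOne (R := R) (ι := FreeMonoid X)) l = Finsupp.single l 1 := rfl
  rw [h1]
  show (FreeAlgebra.equivMonoidAlgebraFreeMonoid (R := R) (X := X)).symm
      (MonoidAlgebra.single l 1) = _
  rw [FreeAlgebra.equivMonoidAlgebraFreeMonoid, AlgEquiv.ofAlgHom_symm_apply]
  rw [MonoidAlgebra.lift_single, one_smul, FreeMonoid.lift_apply]

/-- Explicit formula for `Basis.tensorAlgebra`. -/
lemma basis_tensorAlgebra_apply {R M κ : Type*} [CommSemiring R] [AddCommMonoid M]
    [Module R M] (b : Module.Basis κ R M) (l : FreeMonoid κ) :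
    b.tensorAlgebra l
      = ((FreeMonoid.toList l).map (fun i => TensorAlgebra.ι R (b i))).prod := by
  rw [Module.Basis.tensorAlgebra, Module.Basis.map_apply]
  show (TensorAlgebra.equivFreeAlgebra b).symm (FreeAlgebra.basisFreeMonoid R κ l) = _
  rw [freeAlgebra_basisFreeMonoid_apply]
  rw [map_list_prod, List.map_map]
  congr 1
  ext i
  simp

lemma list_map_fst_snd_inj {α β : Type*} :
    ∀ (l l' : List (α × β)), l.map Prod.fst = l'.map Prod.fst →
      l.map Prod.snd = l'.map Prod.snd → l = l' := by
  intro l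
  induction l with
  | nil => intro l' h1 _; cases l' with
    | nil => rfl
    | cons b t => simp at h1
  | cons a t ih =>
    intro l' h1 h2
    cases l' with
    | nil => simp at h1
    | cons b t' =>
      simp only [List.map_cons, List.cons.injEq] at h1 h2
      have : a = b := Prod.ext h1.1 h2.1
      rw [this, ih t' h1.2 h2.2]

/-- Product of pure tensors in a tensor product of algebras. -/
lemma list_prod_tmul {R A B : Type*} [CommSemiring R] [Semiring A] [Semiring B]
    [Algebra R A] [Algebra R B] (l : List (A × B)) :
    (l.map (fun p => p.1 ⊗ₜ[R] p.2)).prod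
      = (l.map Prod.fst).prod ⊗ₜ[R] (l.map Prod.snd).prod := by
  induction l with
  | nil => simp [Algebra.TensorProduct.one_def]
  | cons a t ih => simp [ih, Algebra.TensorProduct.tmul_mul_tmul]

set_option maxHeartbeats 1000000 in
/-- `φ : T(V ⊗ W) → TV ⊗ TW`, `ι(v ⊗ w) ↦ ι v ⊗ ι w`, is injective and its
range is the subalgebra generated by the elements `ι v ⊗ ι w`. -/
theorem tensorAlgebraTensorToTensorProduct_injective_range (K V W : Type*) [Field K]
    [AddCommGroup V] [Module K V] [AddCommGroup W] [Module K W] :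
    Function.Injective (tensorAlgebraTensorToTensorProduct K V W)
      ∧ (tensorAlgebraTensorToTensorProduct K V W).range
        = Algebra.adjoin K
            {x : TensorAlgebra K V ⊗[K] TensorAlgebra K W | ∃ (v : V) (w : W),
              x = TensorAlgebra.ι K v ⊗ₜ[K] TensorAlgebra.ι K w} := by
  set φ := tensorAlgebraTensorToTensorProduct K V W with hφ
  have hφι : ∀ (v : V) (w : W),
      φ (TensorAlgebra.ι K (v ⊗ₜ[K] w)) = TensorAlgebra.ι K v ⊗ₜ[K] TensorAlgebra.ι K w := by
    intro v w
    rw [hφ, tensorAlgebraTensorToTensorProduct, TensorAlgebra.lift_ι_apply,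
      TensorProduct.map_tmul]
  constructor
  · -- Injectivity
    let bV := Module.Basis.ofVectorSpace K V
    let bW := Module.Basis.ofVectorSpace K W
    let b := bV.tensorProduct bW
    let bT := b.tensorAlgebra
    let bTT := (bV.tensorAlgebra).tensorProduct (bW.tensorAlgebra)
    let g : FreeMonoid ((Module.Basis.ofVectorSpaceIndex K V) × (Module.Basis.ofVectorSpaceIndex K W)) →
        FreeMonoid (Module.Basis.ofVectorSpaceIndex K V) × FreeMonoid (Module.Basis.ofVectorSpaceIndex K W) :=
      fun l => (FreeMonoid.ofList ((FreeMonoid.toList l).map Prod.fst),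
                FreeMonoid.ofList ((FreeMonoid.toList l).map Prod.snd))
    have hg : Function.Injective g := by
      intro l l' h
      have h1 := congrArg Prod.fst h
      have h2 := congrArg Prod.snd h
      simp only [g] at h1 h2
      have h1' : (FreeMonoid.toList l).map Prod.fst = (FreeMonoid.toList l').map Prod.fst :=
        congrArg FreeMonoid.toList h1
      have h2' : (FreeMonoid.toList l).map Prod.snd = (FreeMonoid.toList l').map Prod.snd :=
        congrArg FreeMonoid.toList h2
      have := list_map_fst_snd_inj _ _ h1' h2'
      exact FreeMonoid.toList.injective this
    have key : ∀ l, φ (bT l) = bTT (g l) := by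
      intro l
      rw [show bT l = _ from basis_tensorAlgebra_apply b l]
      rw [map_list_prod, List.map_map]
      have : (⇑φ ∘ fun i => TensorAlgebra.ι K (b i))
          = fun (p : (Module.Basis.ofVectorSpaceIndex K V) × (Module.Basis.ofVectorSpaceIndex K W)) =>
            (TensorAlgebra.ι K (bV p.1)) ⊗ₜ[K] (TensorAlgebra.ι K (bW p.2)) := by
        funext p
        simp only [Function.comp_apply, b, Module.Basis.tensorProduct_apply']
        exact hφι _ _
      rw [this]
      have : ((FreeMonoid.toList l).map fun p =>
            (TensorAlgebra.ι K (bV p.1)) ⊗ₜ[K] (TensorAlgebra.ι K (bW p.2)))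
          = ((FreeMonoid.toList l).map
              (fun p : (Module.Basis.ofVectorSpaceIndex K V) × (Module.Basis.ofVectorSpaceIndex K W) =>
                (TensorAlgebra.ι K (bV p.1), TensorAlgebra.ι K (bW p.2)))).map
            (fun q => q.1 ⊗ₜ[K] q.2) := by
        rw [List.map_map]; rfl
      rw [this, list_prod_tmul, List.map_map, List.map_map]
      have hbTT : bTT (g l) = (bV.tensorAlgebra (g l).1) ⊗ₜ[K] (bW.tensorAlgebra (g l).2) := by
        simp only [bTT, Module.Basis.tensorProduct_apply']
      rw [hbTT]
      congr 1
      · rw [basis_tensorAlgebra_apply]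
        simp only [g, FreeMonoid.toList_ofList, List.map_map]
        rfl
      · rw [basis_tensorAlgebra_apply]
        simp only [g, FreeMonoid.toList_ofList, List.map_map]
        rfl
    have hLI : LinearIndependent K (⇑φ.toLinearMap ∘ ⇑bT) := by
      have : ⇑φ.toLinearMap ∘ ⇑bT = ⇑bTT ∘ g := by
        funext l; exact key l
      rw [this]
      exact bTT.linearIndependent.comp g hg
    have hdisj := Submodule.range_ker_disjoint hLI
    rw [bT.span_eq] at hdisj
    have hker : LinearMap.ker φ.toLinearMap = ⊥ := disjoint_top.mp hdisj.symm
    exact LinearMap.ker_eq_bot.mp hker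
  · -- Range
    apply le_antisymm
    · rintro x ⟨y, rfl⟩
      simp only [AlgHom.toRingHom_eq_coe, RingHom.coe_coe]
      induction y using TensorAlgebra.induction with
      | algebraMap r => rw [AlgHom.commutes]; exact Subalgebra.algebraMap_mem _ r
      | ι m =>
        induction m with
        | zero => rw [map_zero, map_zero]; exact Subalgebra.zero_mem _
        | tmul v w =>
          rw [hφι v w]
          exact Algebra.subset_adjoin ⟨v, w, rfl⟩
        | add m₁ m₂ h1 h2 =>
          rw [map_add, map_add]
          exact Subalgebra.add_mem _ h1 h2
      | mul a c ha hc => rw [map_mul φ a c]; exact Subalgebra.mul_mem _ ha hc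
      | add a c ha hc => rw [map_add φ a c]; exact Subalgebra.add_mem _ ha hc
    · apply Algebra.adjoin_le
      rintro x ⟨v, w, rfl⟩
      exact ⟨TensorAlgebra.ι K (v ⊗ₜ[K] w), hφι v w⟩
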